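/- Let Π : (0,∞) → [0,1] and ε : (0,∞) → [0,∞) be functions with ε non-increasing and ε(α) → 0 as α → ∞. Let K > 0, λ > 0 and M > 0 satisfy: (a) K·Π(10α) ≤ (K·Π(α))² + λK²·ε(α) for all α > 0; (b) λK²·ε(M) ≤ 1/4; (c) K·Π(α) ≤ 1/2 for all α ∈ [M,10M]. Then Π(α) → 0 as α → ∞. -/
import Mathlib


open Set Filter

set_option maxHeartbeats 1000000

/-- The localisation/renormalisation lemma: from the recursive inequality
`K Π(10α) ≤ (K Π(α))² + λ K² ε(α)`, smallness of `λ K² ε(M)` and of `K Π` on `[M, 10M]`,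
one deduces `Π(α) → 0` as `α → ∞`. -/
theorem localisation_lemma (Pi : ℝ → ℝ) (ε : ℝ → ℝ)
    (hPi : ∀ α > (0 : ℝ), Pi α ∈ Icc (0 : ℝ) 1)
    (hε0 : ∀ α > (0 : ℝ), 0 ≤ ε α)
    (hεmono : ∀ α β : ℝ, 0 < α → α ≤ β → ε β ≤ ε α)
    (hεlim : Tendsto ε atTop (nhds 0))
    (K lam M : ℝ) (hK : 0 < K) (hlam : 0 < lam) (hM : 0 < M)
    (ha : ∀ α > (0 : ℝ), K * Pi (10 * α) ≤ (K * Pi α) ^ 2 + lam * K ^ 2 * ε α)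
    (hb : lam * K ^ 2 * ε M ≤ 1 / 4)
    (hc : ∀ α ∈ Icc M (10 * M), K * Pi α ≤ 1 / 2) :
    Tendsto Pi atTop (nhds 0) := by
  have hPi0 : ∀ α > (0 : ℝ), 0 ≤ Pi α := fun α h => (hPi α h).1
  -- Step 1: K * Pi α ≤ 1/2 for all α ≥ M
  have key : ∀ n : ℕ, ∀ α, M ≤ α → α ≤ 10 ^ (n + 1) * M → K * Pi α ≤ 1 / 2 := by
    intro n
    induction n with
    | zero =>
      intro α h1 h2
      exact hc α ⟨h1, by simpa using h2⟩
    | succ n ih =>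
      intro α h1 h2
      by_cases hle : α ≤ 10 ^ (n + 1) * M
      · exact ih α h1 hle
      · push_neg at hle
        have hpow1 : (10 : ℝ) ≤ 10 ^ (n + 1) := by
          calc (10:ℝ) = 10 ^ 1 := (pow_one 10).symm
          _ ≤ 10 ^ (n + 1) := pow_le_pow_right₀ (by norm_num) (by omega)
        have h10M : 10 * M ≤ α := by nlinarith
        have hα'M : M ≤ α / 10 := by linarith
        have hα'pos : 0 < α / 10 := by linarith
        have hup : α / 10 ≤ 10 ^ (n + 1) * M := by
          have : (10:ℝ) ^ (n + 1 + 1) = 10 * 10 ^ (n + 1) := by ring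
          rw [this] at h2
          linarith
        have hKP : K * Pi (α / 10) ≤ 1 / 2 := ih (α / 10) hα'M hup
        have hKP0 : 0 ≤ K * Pi (α / 10) := mul_nonneg hK.le (hPi0 _ hα'pos)
        have hεle : ε (α / 10) ≤ ε M := hεmono M (α / 10) hM hα'M
        have := ha (α / 10) hα'pos
        rw [mul_div_cancel₀ α (by norm_num : (10:ℝ) ≠ 0)] at this
        nlinarith [sq_nonneg (K * Pi (α / 10)), mul_le_mul_of_nonneg_left hεle
          (le_of_lt (by positivity : (0:ℝ) < lam * K ^ 2))]
  have step1 : ∀ α, M ≤ α → K * Pi α ≤ 1 / 2 := by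
    intro α hα
    obtain ⟨n, hn⟩ := pow_unbounded_of_one_lt (α / M) (by norm_num : (1:ℝ) < 10)
    refine key n α hα ?_
    have : α / M < 10 ^ n := hn
    have h1 : α < 10 ^ n * M := by
      rw [div_lt_iff₀ hM] at this; linarith
    have h2 : (10:ℝ) ^ n ≤ 10 ^ (n + 1) :=
      pow_le_pow_right₀ (by norm_num) (Nat.le_succ n)
    nlinarith
  -- Step 2
  rw [Metric.tendsto_atTop]
  intro η hη
  set δ : ℝ := min (1 / 4) (K * η / 8) with hδdef
  have hδpos : 0 < δ := lt_min (by norm_num) (by positivity)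
  have hδ4 : δ ≤ 1 / 4 := min_le_left _ _
  have hδη : δ ≤ K * η / 8 := min_le_right _ _
  -- eventual smallness of lam*K^2*ε
  have hT : Tendsto (fun α => lam * K ^ 2 * ε α) atTop (nhds 0) := by
    simpa using hεlim.const_mul (lam * K ^ 2)
  obtain ⟨A₁, hA₁⟩ := (eventually_atTop.1 (hT.eventually_lt_const hδpos))
  set A₀ : ℝ := max A₁ M with hA₀def
  have hA₀M : M ≤ A₀ := le_max_right _ _
  have hA₀pos : 0 < A₀ := lt_of_lt_of_le hM hA₀M
  -- the decreasing bound
  set b : ℕ → ℝ := fun n => (1/2 : ℝ) ^ (n + 1) + 2 * δ * (1 - (1/2 : ℝ) ^ n) with hbdef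
  have hbhalf : ∀ n, b n ≤ 1 / 2 := by
    intro n
    have h1 : (1/2 : ℝ) ^ n ≤ 1 := pow_le_one₀ (by norm_num) (by norm_num)
    have h0 : (0:ℝ) ≤ (1/2 : ℝ) ^ n := by positivity
    have : (1/2:ℝ) ^ (n+1) = (1/2) * (1/2)^n := by ring
    simp only [hbdef, this]
    nlinarith
  have hb0 : ∀ n, 0 ≤ b n := by
    intro n
    have h1 : (1/2 : ℝ) ^ n ≤ 1 := pow_le_one₀ (by norm_num) (by norm_num)
    have h0 : (0:ℝ) ≤ (1/2 : ℝ) ^ (n+1) := by positivity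
    simp only [hbdef]
    nlinarith
  have claim : ∀ n : ℕ, ∀ α, 10 ^ n * A₀ ≤ α → K * Pi α ≤ b n := by
    intro n
    induction n with
    | zero =>
      intro α hα
      simp only [pow_zero, one_mul] at hα
      have := step1 α (le_trans hA₀M hα)
      simp only [hbdef]
      norm_num
      linarith
    | succ n ih =>
      intro α hα
      have hpown : (0:ℝ) < 10 ^ n := by positivity
      have hstep : (10:ℝ) ^ (n + 1) * A₀ = 10 * (10 ^ n * A₀) := by ring
      rw [hstep] at hα
      have hα' : 10 ^ n * A₀ ≤ α / 10 := by linarith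
      have hα'pos : 0 < α / 10 := lt_of_lt_of_le (by positivity) hα'
      have hA₁' : A₁ ≤ α / 10 := by
        have h1 : (1:ℝ) ≤ 10 ^ n := one_le_pow₀ (by norm_num : (1:ℝ) ≤ 10)
        have : A₀ ≤ α / 10 := le_trans (by nlinarith) hα'
        exact le_trans (le_max_left _ _) this
      have hεsmall : lam * K ^ 2 * ε (α / 10) < δ := hA₁ _ hA₁'
      have hKP : K * Pi (α / 10) ≤ b n := ih _ hα'
      have hKP0 : 0 ≤ K * Pi (α / 10) := mul_nonneg hK.le (hPi0 _ hα'pos)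
      have := ha (α / 10) hα'pos
      rw [mul_div_cancel₀ α (by norm_num : (10:ℝ) ≠ 0)] at this
      have hsq : (K * Pi (α / 10)) ^ 2 ≤ b n ^ 2 := by nlinarith
      have hbn2 : b n ^ 2 ≤ b n / 2 := by nlinarith [hbhalf n, hb0 n]
      have heq : b n / 2 + δ ≤ b (n + 1) := by
        have e1 : b n = (1/2) * (1/2:ℝ)^n + 2*δ*(1-(1/2:ℝ)^n) := by
          simp only [hbdef]; ring
        have e2 : b (n+1) = (1/4) * (1/2:ℝ)^n + 2*δ*(1-(1/2)*(1/2:ℝ)^n) := by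
          simp only [hbdef]; ring
        refine le_of_eq ?_
        rw [e1, e2]; ring
      calc K * Pi α ≤ (K * Pi (α / 10)) ^ 2 + lam * K ^ 2 * ε (α / 10) := this
        _ ≤ b n ^ 2 + δ := add_le_add hsq hεsmall.le
        _ ≤ b n / 2 + δ := by linarith
        _ ≤ b (n + 1) := heq
  -- conclude
  obtain ⟨n, hn⟩ := exists_pow_lt_of_lt_one (by positivity : (0:ℝ) < K * η / 4)
    (by norm_num : (1/2 : ℝ) < 1)
  refine ⟨10 ^ n * A₀, fun α hα => ?_⟩
  have hαpos : 0 < α := lt_of_lt_of_le (by positivity) hα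
  have hbound : K * Pi α ≤ b n := claim n α hα
  have hlt : b n < K * η := by
    have h1 : (1/2:ℝ) ^ (n+1) ≤ (1/2)^n := pow_le_pow_of_le_one (by norm_num) (by norm_num) (Nat.le_succ n)
    have h2 : (1 - (1/2:ℝ)^n) ≤ 1 := by nlinarith [pow_nonneg (by norm_num : (0:ℝ) ≤ 1/2) n]
    have h3 : (0:ℝ) ≤ 1 - (1/2:ℝ)^n := by
      have := pow_le_one₀ (by norm_num : (0:ℝ) ≤ 1/2) (by norm_num : (1/2:ℝ) ≤ 1) (n := n)
      linarith
    simp only [hbdef]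
    nlinarith
  have : Pi α < η := by
    have := lt_of_le_of_lt hbound hlt
    exact lt_of_mul_lt_mul_left (by linarith) hK.le
  rw [Real.dist_eq, sub_zero, abs_of_nonneg (hPi0 α hαpos)]
  exact this
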